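/- Let h : ℕ → ℕ satisfy h(n) ≥ 1 for all n and limsup_n h(n) = ∞. Then for every set F ⊆ ω^ω, the following are equivalent: (1) F ∈ fN(h); (2) there is a sequence (S_n)_{n∈ℕ} with S_n ⊆ ω^n and ∑_n |S_n|/h(n) < ∞ such that F ⊆ {x ∈ ω^ω : x↾n ∈ S_n for infinitely many n}. -/

import Mathlib

open Filter Set

/-- The basic clopen set `[σ]` in the Baire space determined by a finite sequence `σ`. -/
def cylinder (σ : List ℕ) : Set (ℕ → ℕ) :=
  {x | ∀ i : Fin σ.length, x i = σ.get i}

/-- `limsup_n h(n) = ∞`, i.e. `h` takes arbitrarily large values frequently. -/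
def LimsupInfty (h : ℕ → ℕ) : Prop :=
  ∀ m : ℕ, ∃ᶠ n in Filter.atTop, m ≤ h n

/-- The family `fN(h)` of fake null sets: `F ∈ fN(h)` iff for every `ε > 0` there is a
sequence of finite sequences `σ_n` with `∑ 1/h(|σ_n|) < ε` covering `F`. -/
def fN (h : ℕ → ℕ) (F : Set (ℕ → ℕ)) : Prop :=
  ∀ ε : ℝ, 0 < ε →
    ∃ σ : ℕ → List ℕ,
      Summable (fun n => (1 : ℝ) / (h (σ n).length : ℝ)) ∧
      (∑' n, (1 : ℝ) / (h (σ n).length : ℝ)) < ε ∧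
      F ⊆ ⋃ n, cylinder (σ n)

/-- The restriction of `x` to the interval `[l, u)`, extended by `0` elsewhere. -/
def restrIco (x : ℕ → ℕ) (l u : ℕ) : ℕ → ℕ :=
  fun i => if l ≤ i ∧ i < u then x i else 0

/-- `J` is a set of patterns on the interval `[l, u)`: every element vanishes off `[l, u)`. -/
def SuppIco (l u : ℕ) (J : Set (ℕ → ℕ)) : Prop :=
  ∀ σ ∈ J, ∀ i, ¬ (l ≤ i ∧ i < u) → σ i = 0

/-- The family `fE(h)`: partition `ℕ` into consecutive nonempty intervals `I_n = [a n, a (n+1))`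
(`a 0 = 0`, `a` strictly increasing), patterns `J_n ⊆ ω^{I_n}` with `∑ |J_n|/h(|I_n|) < ∞`,
and `F ⊆ {x : x↾I_n ∈ J_n for all but finitely many n}`. -/
def fE (h : ℕ → ℕ) (F : Set (ℕ → ℕ)) : Prop :=
  ∃ a : ℕ → ℕ, a 0 = 0 ∧ StrictMono a ∧
    ∃ J : ℕ → Set (ℕ → ℕ),
      (∀ n, SuppIco (a n) (a (n+1)) (J n)) ∧
      (∀ n, (J n).Finite) ∧
      Summable (fun n => ((J n).ncard : ℝ) / (h (a (n+1) - a n) : ℝ)) ∧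
      F ⊆ {x | ∀ᶠ n in Filter.atTop, restrIco x (a n) (a (n+1)) ∈ J n}

/-- The family `fS(h)` of fake small sets: as `fE(h)` but with
`x↾I_n ∈ J_n` for infinitely many `n`. -/
def fS (h : ℕ → ℕ) (F : Set (ℕ → ℕ)) : Prop :=
  ∃ a : ℕ → ℕ, a 0 = 0 ∧ StrictMono a ∧
    ∃ J : ℕ → Set (ℕ → ℕ),
      (∀ n, SuppIco (a n) (a (n+1)) (J n)) ∧
      (∀ n, (J n).Finite) ∧
      Summable (fun n => ((J n).ncard : ℝ) / (h (a (n+1) - a n) : ℝ)) ∧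
      F ⊆ {x | ∃ᶠ n in Filter.atTop, restrIco x (a n) (a (n+1)) ∈ J n}

/-- The family `fE(Fin)`: as `fE(h)` but one only requires each pattern set `J_n` to be finite. -/
def fEFin (F : Set (ℕ → ℕ)) : Prop :=
  ∃ a : ℕ → ℕ, a 0 = 0 ∧ StrictMono a ∧
    ∃ J : ℕ → Set (ℕ → ℕ),
      (∀ n, SuppIco (a n) (a (n+1)) (J n)) ∧
      (∀ n, (J n).Finite) ∧
      F ⊆ {x | ∀ᶠ n in Filter.atTop, restrIco x (a n) (a (n+1)) ∈ J n}

/-- The family `fS(Fin)`: as `fS(h)` but one only requires each pattern set `J_n` to be finite. -/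
def fSFin (F : Set (ℕ → ℕ)) : Prop :=
  ∃ a : ℕ → ℕ, a 0 = 0 ∧ StrictMono a ∧
    ∃ J : ℕ → Set (ℕ → ℕ),
      (∀ n, SuppIco (a n) (a (n+1)) (J n)) ∧
      (∀ n, (J n).Finite) ∧
      F ⊆ {x | ∃ᶠ n in Filter.atTop, restrIco x (a n) (a (n+1)) ∈ J n}

/-- The family `fN(Fin)`: there are finite `S_n ⊆ ω^n` with
`F ⊆ {x : x↾n ∈ S_n for infinitely many n}`. -/
def fNFin (F : Set (ℕ → ℕ)) : Prop :=
  ∃ S : (n : ℕ) → Set (Fin n → ℕ),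
    (∀ n, (S n).Finite) ∧
    F ⊆ {x | ∃ᶠ n in Filter.atTop, (fun i : Fin n => x i) ∈ S n}

/-- The σ-ideal `M_-`: there are `x_F ∈ ω^ω` and a partition of `ℕ` into consecutive nonempty
intervals `I_n = [a n, a (n+1))` with `F ⊆ {x : x↾I_n ≠ x_F↾I_n for all but finitely many n}`. -/
def Mminus (F : Set (ℕ → ℕ)) : Prop :=
  ∃ xF : ℕ → ℕ, ∃ a : ℕ → ℕ, a 0 = 0 ∧ StrictMono a ∧
    F ⊆ {x | ∀ᶠ n in Filter.atTop, ∃ i, a n ≤ i ∧ i < a (n+1) ∧ x i ≠ xF i}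

lemma fwd (h : ℕ → ℕ) (h1 : ∀ n, 1 ≤ h n) (F : Set (ℕ → ℕ)) (hF : fN h F) :
    ∃ S : (n : ℕ) → Set (Fin n → ℕ),
        (∀ n, (S n).Finite) ∧
        Summable (fun n => ((S n).ncard : ℝ) / (h n : ℝ)) ∧
        F ⊆ {x | ∃ᶠ n in Filter.atTop, (fun i : Fin n => x i) ∈ S n} := by
  have hpos : ∀ n, (0:ℝ) < h n := fun n => by
    have := h1 n; positivity
  choose σ hsum hts hcov using fun m => hF ((1/2)^(m+1)) (by positivity)
  set ℓ : ℕ × ℕ → ℕ := fun p => (σ p.1 p.2).length with hℓ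
  set W : ℕ × ℕ → ℝ := fun p => 1 / (h (ℓ p) : ℝ) with hW
  have hWnn : 0 ≤ W := fun p => by positivity
  have hWsum : Summable W := by
    rw [summable_prod_of_nonneg hWnn]
    refine ⟨fun m => hsum m, ?_⟩
    refine Summable.of_nonneg_of_le (fun m => tsum_nonneg fun k => by positivity)
      (fun m => (hts m).le) ?_
    exact (summable_nat_add_iff 1).2 summable_geometric_two
  have hA : ∀ n, {p : ℕ × ℕ | ℓ p = n}.Finite := by
    intro n
    by_contra hinf
    have hinf' : {p : ℕ × ℕ | ℓ p = n}.Infinite := hinf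
    haveI := hinf'.to_subtype
    have hs : Summable (fun p : {p : ℕ × ℕ | ℓ p = n} => W p) := hWsum.subtype _
    have hs' : Summable (fun _ : {p : ℕ × ℕ | ℓ p = n} => (1 / (h n : ℝ))) := by
      refine hs.congr fun p => ?_
      simp only [hW]
      rw [show ℓ (p : ℕ × ℕ) = n from p.2]
    rw [summable_const_iff] at hs'
    exact (by have := hpos n; positivity : (0:ℝ) < 1 / h n).ne' hs'
  refine ⟨fun n => {f : Fin n → ℕ | ∃ p : ℕ × ℕ, σ p.1 p.2 = List.ofFn f}, ?_, ?_, ?_⟩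
  · intro n
    refine ((hA n).image (fun p => fun i : Fin n => (σ p.1 p.2).getD i 0)).subset ?_
    rintro f ⟨p, hp⟩
    have hpl : ℓ p = n := by simp [hℓ, hp]
    refine ⟨p, hpl, funext fun i => ?_⟩
    have hi : (i : ℕ) < (σ p.1 p.2).length := by rw [show (σ p.1 p.2).length = n from hpl]; exact i.2
    show (σ p.1 p.2).getD (↑i) 0 = f i
    rw [List.getD_eq_getElem _ _ hi]
    simp [hp, List.getElem_ofFn]
  · -- summability
    set e := Equiv.sigmaFiberEquiv ℓ
    have hsig : Summable (W ∘ e) := e.summable_iff.2 hWsum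
    have hq : Summable (fun n => ∑' c : {p // ℓ p = n}, W c) := by
      have := hsig.sigma
      exact this.congr fun n => rfl
    refine hq.of_nonneg_of_le (fun n => by positivity) (fun n => ?_)
    have hqc : ∑' c : {p // ℓ p = n}, W c = ({p : ℕ × ℕ | ℓ p = n}.ncard : ℝ) * (1 / (h n : ℝ)) := by
      have : ∑' c : {p // ℓ p = n}, W c = ∑' _ : {p // ℓ p = n}, (1 / (h n : ℝ)) :=
        tsum_congr fun c => by simp [hW, c.2]
      rw [this, tsum_const, nsmul_eq_mul]
      congr 1
    rw [hqc, div_eq_mul_one_div]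
    have hsub : {f : Fin n → ℕ | ∃ p : ℕ × ℕ, σ p.1 p.2 = List.ofFn f}
        ⊆ (fun p : ℕ × ℕ => fun i : Fin n => (σ p.1 p.2).getD i 0) '' {p : ℕ × ℕ | ℓ p = n} := by
      rintro f ⟨p, hp⟩
      have hpl : ℓ p = n := by simp [hℓ, hp]
      refine ⟨p, hpl, funext fun i => ?_⟩
      have hi : (i : ℕ) < (σ p.1 p.2).length := by rw [show (σ p.1 p.2).length = n from hpl]; exact i.2
      show (σ p.1 p.2).getD (↑i) 0 = f i
      rw [List.getD_eq_getElem _ _ hi]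
      simp [hp, List.getElem_ofFn]
    have hle : ({f : Fin n → ℕ | ∃ p : ℕ × ℕ, σ p.1 p.2 = List.ofFn f}).ncard
        ≤ ({p : ℕ × ℕ | ℓ p = n}).ncard :=
      le_trans (Set.ncard_le_ncard hsub ((hA n).image _)) (Set.ncard_image_le (hA n))
    have : (0:ℝ) ≤ 1 / h n := by positivity
    exact mul_le_mul_of_nonneg_right (by exact_mod_cast hle) this
  · intro x hx
    rw [Set.mem_setOf_eq, frequently_atTop]
    intro L
    set m := (Finset.range (L+1)).sup h with hm
    obtain ⟨k, hk⟩ : ∃ k, x ∈ cylinder (σ m k) := by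
      have := hcov m hx
      rwa [Set.mem_iUnion] at this
    set len := (σ m k).length with hlen
    have hWk : (1:ℝ) / h len < (1/2)^(m+1) :=
      lt_of_le_of_lt (Summable.le_tsum (hsum m) k (fun j _ => by positivity)) (hts m)
    have h2 : (2:ℝ)^(m+1) < h len := by
      rw [one_div_pow, div_lt_div_iff₀ (hpos len) (by positivity)] at hWk
      nlinarith [hWk]
    have h2' : 2^(m+1) < h len := by exact_mod_cast h2
    have hLlen : L < len := by
      by_contra hc
      push_neg at hc
      have : h len ≤ m := Finset.le_sup (Finset.mem_range.2 (Nat.lt_succ_of_le hc))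
      have : h len < 2^(m+1) :=
        lt_of_le_of_lt this (lt_of_lt_of_le (@Nat.lt_two_pow_self m)
          (Nat.pow_le_pow_right (by norm_num) (Nat.le_succ m)))
      omega
    refine ⟨len, hLlen.le, ⟨(m, k), ?_⟩⟩
    refine List.ext_getElem (by simp [hlen]) (fun i hi1 hi2 => ?_)
    have := hk ⟨i, hi1⟩
    simp only [List.get_eq_getElem] at this
    rw [List.getElem_ofFn]
    exact this.symm

lemma bwd (h : ℕ → ℕ) (h1 : ∀ n, 1 ≤ h n) (hlim : LimsupInfty h) (F : Set (ℕ → ℕ))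
    (S : (n : ℕ) → Set (Fin n → ℕ)) (hfin : ∀ n, (S n).Finite)
    (hsum : Summable (fun n => ((S n).ncard : ℝ) / (h n : ℝ)))
    (hcov : F ⊆ {x | ∃ᶠ n in Filter.atTop, (fun i : Fin n => x i) ∈ S n}) :
    fN h F := by
  have hpos : ∀ n, (0:ℝ) < h n := fun n => by have := h1 n; positivity
  intro ε hε
  -- tail
  obtain ⟨N, hN⟩ : ∃ N, ∑' n, ((S (n + N)).ncard : ℝ) / (h (n + N) : ℝ) < ε / 4 := by
    have := (tendsto_sum_nat_add (fun n => ((S n).ncard : ℝ) / (h n : ℝ))).eventually_lt_const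
      (show (0:ℝ) < ε / 4 by positivity)
    exact this.exists
  -- junk weights
  set t : ℕ × ℕ → ℝ := fun p => (ε / 16 * (1/2)^p.1) * (1/2)^p.2 with ht
  have htpos : ∀ p, 0 < t p := fun p => by positivity
  have hd : ∀ p : ℕ × ℕ, ∃ l, (1:ℝ) / h l < t p := by
    intro p
    obtain ⟨l, -, hl⟩ := frequently_atTop.1 (hlim (⌈1 / t p⌉₊ + 1)) 0
    refine ⟨l, ?_⟩
    have h2 : 1 / t p < (h l : ℝ) := by
      have : (⌈1 / t p⌉₊ : ℝ) < (h l : ℝ) := by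
        exact_mod_cast Nat.lt_of_lt_of_le (Nat.lt_succ_self _) hl
      exact lt_of_le_of_lt (Nat.le_ceil _) this
    have h3 : 1 < (h l : ℝ) * t p := by
      rw [div_lt_iff₀ (htpos p)] at h2; linarith
    rw [div_lt_iff₀ (hpos l), mul_comm]
    linarith
  choose d hdlt using hd
  -- the lists
  set L : (n : ℕ) → List (Fin n → ℕ) := fun n => (hfin n).toFinset.toList with hL
  have hLlen : ∀ n, (L n).length = (S n).ncard := fun n => by
    rw [hL, Finset.length_toList]
    exact (Set.ncard_eq_toFinset_card _ (hfin n)).symm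
  -- the cover on the product index
  set σ' : ℕ × ℕ → List ℕ := fun p =>
    if hc : N ≤ p.1 ∧ p.2 < (L p.1).length then List.ofFn ((L p.1).get ⟨p.2, hc.2⟩)
    else List.replicate (d p) 0 with hσ'
  set f : ℕ × ℕ → ℝ := fun p => 1 / (h (σ' p).length : ℝ) with hf
  set f1 : ℕ × ℕ → ℝ := fun p =>
    if N ≤ p.1 ∧ p.2 < (L p.1).length then 1 / (h p.1 : ℝ) else 0 with hf1
  have hfle : ∀ p, f p ≤ f1 p + t p := by
    intro p
    by_cases hc : N ≤ p.1 ∧ p.2 < (L p.1).length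
    · have : (σ' p).length = p.1 := by simp [hσ', dif_pos hc]
      simp only [hf1]
      rw [if_pos hc]
      simp only [hf, this]
      linarith [(htpos p).le]
    · have : (σ' p).length = d p := by simp [hσ', dif_neg hc]
      simp only [hf1]
      rw [if_neg hc]
      simp only [hf, this]
      linarith [hdlt p]
  have hf1slice : ∀ n, (fun k => f1 (n, k)) =
      fun k => if N ≤ n ∧ k < (L n).length then 1 / (h n : ℝ) else 0 := fun n => rfl
  have hf1tsum : ∀ n, ∑' k, f1 (n, k) =
      (if N ≤ n then ((S n).ncard : ℝ) / (h n : ℝ) else 0) := by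
    intro n
    rw [tsum_eq_sum (s := Finset.range (L n).length)
      (fun k hk => by
        simp only [hf1]
        rw [if_neg]
        intro ⟨_, hlt⟩
        exact hk (Finset.mem_range.2 hlt))]
    by_cases hn : N ≤ n
    · rw [if_pos hn]
      have : ∀ k ∈ Finset.range (L n).length, f1 (n, k) = 1 / (h n : ℝ) := by
        intro k hk
        simp only [hf1]
        rw [if_pos ⟨hn, Finset.mem_range.1 hk⟩]
      rw [Finset.sum_congr rfl this, Finset.sum_const, Finset.card_range, hLlen,
        nsmul_eq_mul, div_eq_mul_one_div]
      ring
    · rw [if_neg hn]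
      refine Finset.sum_eq_zero fun k _ => ?_
      simp only [hf1]
      rw [if_neg (fun hc => hn hc.1)]
  have hf1sliceSummable : ∀ n, Summable fun k => f1 (n, k) := by
    intro n
    refine summable_of_finite_support ((Set.finite_Iio (L n).length).subset ?_)
    intro k hk
    simp only [Function.mem_support, hf1] at hk
    rw [Set.mem_Iio]
    by_contra hc
    push_neg at hc
    exact hk (if_neg (fun hc2 => absurd hc2.2 (not_lt.2 hc)))
  have hf1sum : Summable f1 := by
    rw [summable_prod_of_nonneg (fun p => by simp only [hf1]; split <;> positivity)]
    refine ⟨hf1sliceSummable, ?_⟩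
    refine hsum.of_nonneg_of_le (fun n => ?_) (fun n => ?_)
    · rw [hf1tsum]; split <;> positivity
    · rw [hf1tsum]; split
      · exact le_rfl
      · positivity
  have htsumm : Summable t := by
    refine Summable.mul_of_nonneg (f := fun m => ε / 16 * (1/2 : ℝ)^m)
      (g := fun k => (1/2 : ℝ)^k) (summable_geometric_two.mul_left _)
      summable_geometric_two (fun m => by positivity) (fun k => by positivity)
  have hfnn : ∀ p, 0 ≤ f p := fun p => by simp only [hf]; positivity
  have hfsumm : Summable f := (hf1sum.add htsumm).of_nonneg_of_le hfnn hfle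
  set g : ℕ → ℝ := fun n => if N ≤ n then ((S n).ncard : ℝ) / (h n : ℝ) else 0 with hg
  have hgsumm : Summable g := by
    refine hsum.of_nonneg_of_le (fun n => by simp only [hg]; split <;> positivity)
      (fun n => ?_)
    simp only [hg]; split
    · exact le_rfl
    · positivity
  have hgt : ∑' n, g n < ε / 4 := by
    have key := Summable.sum_add_tsum_nat_add (f := g) N hgsumm
    have h0 : ∑ i ∈ Finset.range N, g i = 0 := by
      refine Finset.sum_eq_zero fun i hi => ?_
      simp only [hg]
      rw [if_neg (Nat.not_le.2 (Finset.mem_range.1 hi))]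
    have h1 : ∑' n, g (n + N) = ∑' n, ((S (n + N)).ncard : ℝ) / (h (n + N) : ℝ) := by
      refine tsum_congr fun n => ?_
      simp only [hg]
      rw [if_pos (Nat.le_add_left _ _)]
    rw [h0, zero_add, h1] at key
    rw [← key]
    exact hN
  have hts1 : ∑' p, f1 p < ε / 4 := by
    rw [Summable.tsum_prod' hf1sum hf1sliceSummable]
    calc ∑' (n : ℕ) (k : ℕ), f1 (n, k) = ∑' n, g n := tsum_congr fun n => hf1tsum n
    _ < ε / 4 := hgt
  have hts2 : ∑' p, t p ≤ ε / 4 := by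
    have habs1 : Summable fun m => ‖ε / 16 * (1/2 : ℝ)^m‖ := by
      refine (summable_geometric_two.mul_left (ε/16)).congr fun m => ?_
      rw [Real.norm_eq_abs, abs_of_nonneg (by positivity)]
    have habs2 : Summable fun k => ‖(1/2 : ℝ)^k‖ := by
      refine summable_geometric_two.congr fun m => ?_
      rw [Real.norm_eq_abs, abs_of_nonneg (by positivity)]
    have := tsum_mul_tsum_of_summable_norm habs1 habs2
    rw [ht, ← this, tsum_mul_left, tsum_geometric_two]
    nlinarith [hε.le]
  have htot : ∑' p, f p < ε := by
    calc ∑' p, f p ≤ ∑' p, (f1 p + t p) :=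
          Summable.tsum_le_tsum hfle hfsumm (hf1sum.add htsumm)
    _ = ∑' p, f1 p + ∑' p, t p := Summable.tsum_add hf1sum htsumm
    _ < ε := by linarith
  -- assemble
  set e : ℕ ≃ ℕ × ℕ := (Denumerable.eqv (ℕ × ℕ)).symm with he
  refine ⟨fun n => σ' (e n), ?_, ?_, ?_⟩
  · exact (e.summable_iff (f := f)).2 hfsumm
  · calc ∑' n, (1:ℝ) / (h ((σ' (e n)).length) : ℝ) = ∑' p, f p := e.tsum_eq f
    _ < ε := htot
  · intro x hx
    obtain ⟨n, hn, hmem⟩ := frequently_atTop.1 (hcov hx) N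
    have hmem2 : (fun i : Fin n => x i) ∈ L n :=
      Finset.mem_toList.2 ((hfin n).mem_toFinset.2 hmem)
    obtain ⟨k, hk⟩ := List.mem_iff_get.1 hmem2
    refine Set.mem_iUnion.2 ⟨e.symm (n, (k : ℕ)), ?_⟩
    have heq : σ' (e (e.symm (n, (k : ℕ)))) = List.ofFn (fun i : Fin n => x i) := by
      rw [e.apply_symm_apply]
      have hc : N ≤ (n, (k : ℕ)).1 ∧ (n, (k : ℕ)).2 < (L (n, (k : ℕ)).1).length := ⟨hn, k.2⟩
      simp only [hσ']
      rw [dif_pos hc]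
      rw [show (⟨(n, (k : ℕ)).2, hc.2⟩ : Fin (L (n, (k : ℕ)).1).length) = k from Fin.eta k k.2, hk]
    show x ∈ cylinder (σ' (e (e.symm (n, (k : ℕ)))))
    rw [heq]
    intro i
    rw [List.get_ofFn]
    simp

theorem stmt0 (h : ℕ → ℕ) (h1 : ∀ n, 1 ≤ h n) (hlim : LimsupInfty h) (F : Set (ℕ → ℕ)) :
    fN h F ↔
      ∃ S : (n : ℕ) → Set (Fin n → ℕ),
        (∀ n, (S n).Finite) ∧
        Summable (fun n => ((S n).ncard : ℝ) / (h n : ℝ)) ∧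
        F ⊆ {x | ∃ᶠ n in Filter.atTop, (fun i : Fin n => x i) ∈ S n} := by
  constructor
  · exact fun hF => fwd h h1 F hF
  · rintro ⟨S, hfin, hsum, hcov⟩
    exact bwd h h1 hlim F S hfin hsum hcov
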